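/- arXiv:0907.5079 — 2 statements merged into one kernel-verified Lean document; each statement's English description precedes it below -/
import Mathlib

section
/- Let T be a finite connected graph with at least one edge, let S be a spanning tree of T, and for each edge e of T not in S let the length of the cycle consisting of e together with the simple path in S joining its endpoints be recorded; let L be the set of these lengths. Let Γ be a group acting on the left on a finite graph G by graph automorphisms, and assume that for every vertex v of G, every nonidentity γ ∈ Γ, and every l ∈ L ∪ {4}, there is no walk of length l in G from v to γ·v. Then: (a) the induced Γ-action on the poset Hom(T,G), given by (γ·α)(u) = γ·α(u), is free and strongly regular; (b) the order-preserving map p_T : Hom(T,G) → Hom(T, G/Γ) induced by the quotient homomorphism p : G → G/Γ preserves rank, where rank(α) = Σ_{u ∈ V(T)} (|α(u)| − 1); and (c) p_T is surjective, p_T(α) = p_T(β) holds iff β = γ·α for some γ ∈ Γ, and p_T(α) ≤ p_T(β) holds iff γ·α ≤ β for some γ ∈ Γ; consequently p_T induces an isomorphism of posets from the quotient Hom(T,G)/Γ onto Hom(T, G/Γ). -/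
/-- A graph: a vertex set with a symmetric adjacency relation (loops allowed). -/
structure SymmGraph (V : Type) where
  Adj : V → V → Prop
  symm : ∀ x y, Adj x y → Adj y x

/-- Multihomomorphisms from `G` to `H`. -/
def SymmGraph.IsMultiHom {V W : Type} (G : SymmGraph V) (H : SymmGraph W) (α : V → Set W) : Prop :=
  (∀ v, (α v).Nonempty) ∧ ∀ v w, G.Adj v w → ∀ x ∈ α v, ∀ y ∈ α w, H.Adj x y

/-- The Hom poset `Hom(G,H)`. -/
def HomPoset {V W : Type} (G : SymmGraph V) (H : SymmGraph W) : Type :=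
  {α : V → Set W // G.IsMultiHom H α}

instance {V W : Type} (G : SymmGraph V) (H : SymmGraph W) : PartialOrder (HomPoset G H) :=
  Subtype.partialOrder _

/-- A walk of length `l` from `v` to `w`. -/
def SymmGraph.HasWalk {V : Type} (G : SymmGraph V) (l : ℕ) (v w : V) : Prop :=
  ∃ f : ℕ → V, f 0 = v ∧ f l = w ∧ ∀ i < l, G.Adj (f i) (f (i + 1))

section Quot

variable {Γ VG : Type} [Group Γ] [MulAction Γ VG]

/-- The orbit relation of a `Γ`-action. -/
def orbRel (Γ : Type) [Group Γ] (VG : Type) [MulAction Γ VG] (v w : VG) : Prop :=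
  ∃ γ : Γ, w = γ • v

/-- The quotient graph `G/Γ`: vertices are orbits, two orbits are adjacent iff they
contain adjacent representatives. -/
def quotGraph (G : SymmGraph VG) (Γ : Type) [Group Γ] [MulAction Γ VG] :
    SymmGraph (Quot (orbRel Γ VG)) where
  Adj X Y := ∃ v w, Quot.mk _ v = X ∧ Quot.mk _ w = Y ∧ G.Adj v w
  symm X Y h := by
    obtain ⟨v, w, hv, hw, hvw⟩ := h
    exact ⟨w, v, hw, hv, G.symm _ _ hvw⟩

/-- The map `p_T : Hom(T,G) → Hom(T, G/Γ)` induced by the quotient homomorphism. -/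
def quotHom {VT : Type} (T : SymmGraph VT) (G : SymmGraph VG) (Γ : Type) [Group Γ] [MulAction Γ VG]
    (α : HomPoset T G) : HomPoset T (quotGraph G Γ) :=
  ⟨fun u => Quot.mk (orbRel Γ VG) '' α.1 u,
   ⟨fun u => (α.2.1 u).image _,
    fun v w hvw x hx y hy => by
      obtain ⟨a, ha, rfl⟩ := hx
      obtain ⟨b, hb, rfl⟩ := hy
      exact ⟨a, b, rfl, rfl, α.2.2 v w hvw a ha b hb⟩⟩⟩

/-- The action of `γ ∈ Γ` on `Hom(T,G)`, `(γ·α)(u) = γ·α(u)`. -/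
def homActG {VT : Type} (T : SymmGraph VT) (G : SymmGraph VG) [Group Γ] [MulAction Γ VG]
    (hGadj : ∀ (γ : Γ) v w, G.Adj v w → G.Adj (γ • v) (γ • w))
    (γ : Γ) (α : HomPoset T G) : HomPoset T G :=
  ⟨fun u => (γ • ·) '' α.1 u,
   ⟨fun u => (α.2.1 u).image _,
    fun v w hvw x hx y hy => by
      obtain ⟨a, ha, rfl⟩ := hx
      obtain ⟨b, hb, rfl⟩ := hy
      exact hGadj γ _ _ (α.2.2 v w hvw a ha b hb)⟩⟩

/-- The rank of a multihomomorphism. -/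
noncomputable def homRank {VT : Type} [Fintype VT] (T : SymmGraph VT) {W : Type} (H : SymmGraph W)
    (α : HomPoset T H) : ℕ :=
  ∑ u : VT, ((α.1 u).ncard - 1)

end Quot


section AuxL

variable {Γ VG : Type} [Group Γ] [MulAction Γ VG]

lemma orbRel_equivalence : Equivalence (orbRel Γ VG) where
  refl x := ⟨1, (one_smul Γ x).symm⟩
  symm := by rintro x y ⟨γ, rfl⟩; exact ⟨γ⁻¹, (inv_smul_smul γ x).symm⟩
  trans := by rintro x y z ⟨γ, rfl⟩ ⟨δ, rfl⟩; exact ⟨δ * γ, (mul_smul δ γ x).symm⟩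

lemma quotMk_eq_iff {a b : VG} :
    Quot.mk (orbRel Γ VG) a = Quot.mk (orbRel Γ VG) b ↔ ∃ γ : Γ, b = γ • a := by
  rw [Quot.eq, (orbRel_equivalence (Γ := Γ)).eqvGen_iff]
  rfl

lemma quotMk_smul (γ : Γ) (a : VG) :
    Quot.mk (orbRel Γ VG) (γ • a) = Quot.mk (orbRel Γ VG) a :=
  quotMk_eq_iff.mpr ⟨γ⁻¹, (inv_smul_smul γ a).symm⟩

lemma quot_adj_lift (G : SymmGraph VG) (hGadj : ∀ (γ : Γ) v w, G.Adj v w → G.Adj (γ • v) (γ • w))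
    {v : VG} {Y : Quot (orbRel Γ VG)}
    (h : (quotGraph G Γ).Adj (Quot.mk _ v) Y) :
    ∃ y : VG, Quot.mk (orbRel Γ VG) y = Y ∧ G.Adj v y := by
  obtain ⟨v', w', hv', hw', hvw⟩ := h
  obtain ⟨δ, rfl⟩ := quotMk_eq_iff.mp hv'
  exact ⟨δ • w', by rw [quotMk_smul, hw'], hGadj δ _ _ hvw⟩

end AuxL

noncomputable def liftWalkRev {VT VG W : Type} {S : SimpleGraph VT} (x₀ : VG) (O : VT → W)
    (step : VG → W → VG) : {u r : VT} → S.Walk u r → VG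
  | _, _, SimpleGraph.Walk.nil => x₀
  | u, _, SimpleGraph.Walk.cons _ p => step (liftWalkRev x₀ O step p) (O u)

open SimpleGraph in
/-- In a tree, the canonical paths to the root across an edge differ by a cons. -/
lemma tree_path_cons {VT : Type} {S : SimpleGraph VT} (hS : S.IsAcyclic) {r u w : VT}
    (pu : S.Path u r) (pw : S.Path w r) (h : S.Adj u w) :
    (pu : S.Walk u r) = SimpleGraph.Walk.cons h (pw : S.Walk w r) ∨
    (pw : S.Walk w r) = SimpleGraph.Walk.cons h.symm (pu : S.Walk u r) := by
  classical
  by_cases hu : u ∈ (pw : S.Walk w r).support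
  · right
    have hdrop : ((pw : S.Walk w r).dropUntil u hu).IsPath := pw.2.dropUntil hu
    have hpu : pu = ⟨(pw : S.Walk w r).dropUntil u hu, hdrop⟩ := hS.path_unique _ _
    have htake : ((pw : S.Walk w r).takeUntil u hu).IsPath := pw.2.takeUntil hu
    have hsingle : (⟨(pw : S.Walk w r).takeUntil u hu, htake⟩ : S.Path w u) =
        ⟨SimpleGraph.Walk.cons h.symm SimpleGraph.Walk.nil, by simp [h.ne']⟩ :=
      hS.path_unique _ _
    have hspec := (pw : S.Walk w r).take_spec hu
    have h1 : ((pw : S.Walk w r).takeUntil u hu) =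
        SimpleGraph.Walk.cons h.symm SimpleGraph.Walk.nil := congrArg Subtype.val hsingle
    rw [← hspec, h1, hpu]
    simp
  · left
    have : (SimpleGraph.Walk.cons h (pw : S.Walk w r)).IsPath :=
      (SimpleGraph.Walk.cons_isPath_iff _ _).mpr ⟨pw.2, hu⟩
    exact congrArg Subtype.val (hS.path_unique pu ⟨_, this⟩)

open SimpleGraph in
lemma exists_base {Γ VT VG : Type} [Group Γ] [MulAction Γ VG] {S : SimpleGraph VT}
    (hconn : S.Connected) (hacyc : S.IsAcyclic) (G : SymmGraph VG)
    (hGadj : ∀ (γ : Γ) v w, G.Adj v w → G.Adj (γ • v) (γ • w))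
    (O : VT → Quot (orbRel Γ VG))
    (hOadj : ∀ u w, S.Adj u w → (quotGraph G Γ).Adj (O u) (O w)) :
    ∃ b : VT → VG, (∀ u, Quot.mk (orbRel Γ VG) (b u) = O u) ∧
      (∀ u w, S.Adj u w → G.Adj (b u) (b w)) := by
  classical
  have hne : Nonempty VT := hconn.nonempty
  obtain ⟨r⟩ := hne
  obtain ⟨x₀, hx₀⟩ := Quot.exists_rep (O r)
  set unl : VG → Quot (orbRel Γ VG) → VG := fun v Y =>
    if h : ∃ y, Quot.mk (orbRel Γ VG) y = Y ∧ G.Adj v y then h.choose else v with hunl_def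
  have hunl : ∀ (v : VG) (Y : Quot (orbRel Γ VG)),
      (quotGraph G Γ).Adj (Quot.mk (orbRel Γ VG) v) Y →
      Quot.mk (orbRel Γ VG) (unl v Y) = Y ∧ G.Adj v (unl v Y) := by
    intro v Y h
    have hex := quot_adj_lift G hGadj h
    rw [hunl_def]
    simp only [dif_pos hex]
    exact hex.choose_spec
  -- spec of liftWalkRev
  have hlift0 : ∀ (u v : VT) (p : S.Walk u v), v = r →
      Quot.mk (orbRel Γ VG) (liftWalkRev x₀ O unl p) = O u := by
    intro u v p
    induction p with
    | nil => rintro rfl; exact hx₀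
    | @cons a c v h p ih =>
      intro hv
      show Quot.mk (orbRel Γ VG) (unl (liftWalkRev x₀ O unl p) (O a)) = O a
      have hadj : (quotGraph G Γ).Adj (Quot.mk (orbRel Γ VG) (liftWalkRev x₀ O unl p)) (O a) := by
        rw [ih hv]
        exact (quotGraph G Γ).symm _ _ (hOadj a c h)
      exact (hunl _ _ hadj).1
  have hlift : ∀ (u : VT) (p : S.Walk u r),
      Quot.mk (orbRel Γ VG) (liftWalkRev x₀ O unl p) = O u := fun u p => hlift0 u r p rfl
  have hliftadj : ∀ (a c : VT) (h : S.Adj a c) (p : S.Walk c r),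
      G.Adj (liftWalkRev x₀ O unl p) (liftWalkRev x₀ O unl (SimpleGraph.Walk.cons h p)) := by
    intro a c h p
    show G.Adj (liftWalkRev x₀ O unl p) (unl (liftWalkRev x₀ O unl p) (O a))
    have hadj : (quotGraph G Γ).Adj (Quot.mk (orbRel Γ VG) (liftWalkRev x₀ O unl p)) (O a) := by
      rw [hlift c p]
      exact (quotGraph G Γ).symm _ _ (hOadj a c h)
    exact (hunl _ _ hadj).2
  -- canonical paths
  set pth : ∀ u : VT, S.Path u r := fun u => ((hconn u r).some).toPath with hpth_def
  refine ⟨fun u => liftWalkRev x₀ O unl (pth u : S.Walk u r), fun u => hlift u _, ?_⟩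
  intro u w h
  show G.Adj (liftWalkRev x₀ O unl (pth u : S.Walk u r)) (liftWalkRev x₀ O unl (pth w : S.Walk w r))
  rcases tree_path_cons hacyc (pth u) (pth w) h with hc | hc
  · rw [hc]
    exact G.symm _ _ (hliftadj u w h _)
  · rw [hc]
    exact hliftadj w u h.symm _

lemma SymmGraph.hasWalk_concat {V : Type} (G : SymmGraph V) {k : ℕ} {v w z : V}
    (h : G.HasWalk k v w) (ha : G.Adj w z) : G.HasWalk (k + 1) v z := by
  obtain ⟨f, hf0, hfk, hfa⟩ := h
  refine ⟨fun i => if i ≤ k then f i else z, by simp [hf0], by simp, ?_⟩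
  intro i hi
  rcases Nat.lt_or_ge i k with hik | hik
  · simp only [if_pos (Nat.le_of_lt hik), if_pos (Nat.succ_le_of_lt hik)]
    exact hfa i hik
  · have hik' : i = k := Nat.le_antisymm (Nat.lt_succ_iff.mp hi) hik
    subst hik'
    simp only [if_pos (Nat.le_refl i), if_neg (by omega : ¬ i + 1 ≤ i)]
    exact hfk ▸ ha

/-- under the walk condition on lengths in `L ∪ {4}` (with `L` the set
of lengths of the fundamental cycles of a spanning tree `S` of `T`), the `Γ`-action
on `Hom(T,G)` is free and strongly regular, `p_T` preserves rank, and `p_T` induces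
an isomorphism `Hom(T,G)/Γ ≅ Hom(T,G/Γ)`. -/
theorem stmt_5 {Γ VT VG : Type} [Group Γ] [Fintype VT] [Fintype VG] [MulAction Γ VG]
    (T : SymmGraph VT) (G : SymmGraph VG)
    (hGadj : ∀ (γ : Γ) v w, G.Adj v w → G.Adj (γ • v) (γ • w))
    -- T is connected with at least one edge
    (hTconn : ∀ a b : VT, ∃ l, T.HasWalk l a b)
    (hedge : ∃ a b, T.Adj a b)
    -- S is a spanning tree of T
    (S : SimpleGraph VT) (hStree : S.IsTree)
    (hSsub : ∀ a b, S.Adj a b → T.Adj a b)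
    -- the walk condition, with L the set of fundamental cycle lengths
    (hdisc : ∀ (v : VG) (γ : Γ), γ ≠ 1 → ∀ l : ℕ,
      ((∃ a b, T.Adj a b ∧ ¬ S.Adj a b ∧ l = S.dist a b + 1) ∨ l = 4) →
      ¬ G.HasWalk l v (γ • v)) :
    -- (a) the action on Hom(T,G) is free and strongly regular
    ((∀ (γ : Γ) (α : HomPoset T G), homActG T G hGadj γ α = α → γ = 1) ∧
     (∀ (α β μ : HomPoset T G) (γ : Γ), α ≤ μ → β ≤ μ →
        homActG T G hGadj γ α = β → γ = 1)) ∧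
    -- (b) p_T preserves rank
    (∀ α : HomPoset T G, homRank T (quotGraph G Γ) (quotHom T G Γ α) = homRank T G α) ∧
    -- (c) p_T induces an isomorphism Hom(T,G)/Γ ≅ Hom(T, G/Γ)
    (Function.Surjective (quotHom T G Γ) ∧
     (∀ α β : HomPoset T G,
        quotHom T G Γ α = quotHom T G Γ β ↔ ∃ γ : Γ, β = homActG T G hGadj γ α) ∧
     (∀ α β : HomPoset T G,
        quotHom T G Γ α ≤ quotHom T G Γ β ↔ ∃ γ : Γ, homActG T G hGadj γ α ≤ β)) := by
  classical
  -- four-point lemma from the `l = 4` walk condition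
  have hFour : ∀ (x y z w : VG) (γ : Γ),
      G.Adj x y → G.Adj y z → G.Adj z w → G.Adj w (γ • x) → γ = 1 := by
    intro x y z w γ h1 h2 h3 h4
    by_contra hγ
    apply hdisc x γ hγ 4 (Or.inr rfl)
    refine ⟨fun i => if i = 0 then x else if i = 1 then y else if i = 2 then z
      else if i = 3 then w else γ • x, by norm_num, by norm_num, ?_⟩
    intro i hi
    interval_cases i <;> simpa using ‹_›
  have hU : ∀ (v y : VG) (γ : Γ), G.Adj v y → G.Adj v (γ • y) → γ = 1 := fun v y γ h1 h2 =>
    hFour y v y v γ (G.symm _ _ h1) h1 (G.symm _ _ h1) h2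
  have hNbrT : ∀ u : VT, ∃ w, T.Adj u w := by
    obtain ⟨a, b, hab⟩ := hedge
    intro u
    obtain ⟨l, f, hf0, hfl, hfa⟩ := hTconn a u
    match l, hfl with
    | 0, hfl =>
      have : u = a := by rw [← hfl, hf0]
      exact this ▸ ⟨b, hab⟩
    | l + 1, hfl =>
      exact ⟨f l, T.symm _ _ (hfl ▸ hfa l (Nat.lt_succ_self l))⟩
  have hInj : ∀ (α : HomPoset T G) (u : VT), Set.InjOn (Quot.mk (orbRel Γ VG)) (α.1 u) := by
    intro α u x hx x' hx' hxx
    obtain ⟨γ, rfl⟩ := quotMk_eq_iff.mp hxx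
    obtain ⟨w, hw⟩ := hNbrT u
    obtain ⟨y, hy⟩ := α.2.1 w
    have h1 : G.Adj y x := G.symm _ _ (α.2.2 u w hw x hx y hy)
    have h2 : G.Adj y (γ • x) := G.symm _ _ (α.2.2 u w hw _ hx' y hy)
    rw [hU y x γ h1 h2, one_smul]
  have hle : ∀ (α β : HomPoset T G), α ≤ β → ∀ u, α.1 u ⊆ β.1 u := fun _ _ h u => h u
  -- the propagation lemma
  have hProp : ∀ (α β : HomPoset T G),
      (∀ u, Quot.mk (orbRel Γ VG) '' α.1 u ⊆ Quot.mk (orbRel Γ VG) '' β.1 u) →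
      ∃ γ : Γ, ∀ u, (γ • ·) '' α.1 u ⊆ β.1 u := by
    intro α β hsub
    obtain ⟨a0, b0, hab0⟩ := hedge
    obtain ⟨x₀, hx₀⟩ := α.2.1 a0
    obtain ⟨y₀, hy₀, hQ⟩ := hsub a0 ⟨x₀, hx₀, rfl⟩
    obtain ⟨γ, hγ⟩ := quotMk_eq_iff.mp hQ.symm
    refine ⟨γ, ?_⟩
    have step : ∀ u w, T.Adj u w → (∃ x ∈ α.1 u, γ • x ∈ β.1 u) →
        ∀ x' ∈ α.1 w, γ • x' ∈ β.1 w := by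
      rintro u w huw ⟨x, hx, hβx⟩ x' hx'
      obtain ⟨y', hy', hQ'⟩ := hsub w ⟨x', hx', rfl⟩
      have hQ2 : Quot.mk (orbRel Γ VG) (γ • x') = Quot.mk (orbRel Γ VG) y' := by
        rw [quotMk_smul, ← hQ']
      obtain ⟨ε, hε⟩ := quotMk_eq_iff.mp hQ2
      have h1 : G.Adj (γ • x) (γ • x') := hGadj γ _ _ (α.2.2 u w huw x hx x' hx')
      have h2 : G.Adj (γ • x) y' := β.2.2 u w huw _ hβx y' hy'
      have hε1 : ε = 1 := hU (γ • x) (γ • x') ε h1 (hε ▸ h2)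
      rw [hε1, one_smul] at hε
      exact hε ▸ hy'
    have Qprop : ∀ l u, T.HasWalk l a0 u → ∃ x ∈ α.1 u, γ • x ∈ β.1 u := by
      intro l
      induction l with
      | zero =>
        rintro u ⟨f, hf0, hfl, -⟩
        have : u = a0 := by rw [← hfl, hf0]
        subst this
        exact ⟨x₀, hx₀, hγ ▸ hy₀⟩
      | succ l ih =>
        rintro u ⟨f, hf0, hfl, hfa⟩
        have hw : T.HasWalk l a0 (f l) := ⟨f, hf0, rfl, fun i hi => hfa i (Nat.lt_succ_of_lt hi)⟩
        have hadj : T.Adj (f l) u := hfl ▸ hfa l (Nat.lt_succ_self l)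
        obtain ⟨x', hx'⟩ := α.2.1 u
        exact ⟨x', hx', step (f l) u hadj (ih (f l) hw) x' hx'⟩
    intro u
    rintro - ⟨x', hx', rfl⟩
    obtain ⟨w, hw⟩ := hNbrT u
    obtain ⟨l, hwalk⟩ := hTconn a0 w
    exact step w u (T.symm _ _ hw) (Qprop l w hwalk) x' hx'
  refine ⟨⟨?_, ?_⟩, ?_, ?_, ?_, ?_⟩
  · -- freeness
    intro γ α hfix
    obtain ⟨a, b, hab⟩ := hedge
    obtain ⟨x, hx⟩ := α.2.1 a
    obtain ⟨y, hy⟩ := α.2.1 b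
    have hγx : γ • x ∈ α.1 a := by
      have := congrArg (fun (β : HomPoset T G) => β.1 a) hfix
      simp only [homActG] at this
      rw [← this]
      exact ⟨x, hx, rfl⟩
    have h1 : G.Adj x y := α.2.2 a b hab x hx y hy
    exact hFour x y x y γ h1 (G.symm _ _ h1) h1 (G.symm _ _ (α.2.2 a b hab _ hγx y hy))
  · -- strong regularity
    intro α β μ γ hαμ hβμ heq
    obtain ⟨a, b, hab⟩ := hedge
    obtain ⟨x, hx⟩ := α.2.1 a
    obtain ⟨y, hy⟩ := μ.2.1 b
    have hxμ : x ∈ μ.1 a := hle α μ hαμ a hx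
    have hγx : γ • x ∈ μ.1 a := by
      apply hle β μ hβμ a
      rw [← heq]
      exact ⟨x, hx, rfl⟩
    have h1 : G.Adj x y := μ.2.2 a b hab x hxμ y hy
    exact hFour x y x y γ h1 (G.symm _ _ h1) h1 (G.symm _ _ (μ.2.2 a b hab _ hγx y hy))
  · -- rank preservation
    intro α
    apply Finset.sum_congr rfl
    intro u _
    show (Quot.mk (orbRel Γ VG) '' α.1 u).ncard - 1 = (α.1 u).ncard - 1
    rw [Set.ncard_image_of_injOn (hInj α u)]
  · -- surjectivity
    intro β
    have hSelf : ∀ u, T.Adj u u → ∀ x, Quot.mk (orbRel Γ VG) x ∈ β.1 u → G.Adj x x := by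
      intro u hu x hQx
      have hq : (quotGraph G Γ).Adj (Quot.mk (orbRel Γ VG) x) (Quot.mk (orbRel Γ VG) x) :=
        β.2.2 u u hu _ hQx _ hQx
      obtain ⟨y, hQy, hady⟩ := quot_adj_lift G hGadj hq
      obtain ⟨δ, hδ⟩ := quotMk_eq_iff.mp hQy.symm
      have hδ1 : δ = 1 := by
        by_contra hne
        apply hdisc x δ hne 1 (Or.inl ⟨u, u, hu, S.loopless.irrefl u, by rw [SimpleGraph.dist_self]⟩)
        refine ⟨fun i => if i = 0 then x else δ • x, by norm_num, by norm_num, ?_⟩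
        intro i hi
        interval_cases i
        simpa using hδ ▸ hady
      rw [hδ1, one_smul] at hδ
      exact hδ ▸ hady
    by_cases hsing : ∀ u w : VT, u = w
    · -- T has a single vertex, carrying a loop
      obtain ⟨r, b0, hrb⟩ := hedge
      have hloop : T.Adj r r := by rw [show b0 = r from hsing b0 r] at hrb; exact hrb
      obtain ⟨x₀, hx₀⟩ := Quot.exists_rep ((β.2.1 r).choose)
      have hO : Quot.mk (orbRel Γ VG) x₀ ∈ β.1 r := by
        rw [hx₀]; exact (β.2.1 r).choose_spec
      have hx₀self : G.Adj x₀ x₀ := hSelf r hloop x₀ hO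
      set A : Set VG := {x | Quot.mk (orbRel Γ VG) x ∈ β.1 r ∧ G.Adj x₀ x} with hAdef
      have hx₀A : x₀ ∈ A := ⟨hO, hx₀self⟩
      have hpair : ∀ x ∈ A, ∀ y ∈ A, G.Adj x y := by
        intro x hx y hy
        have hq : (quotGraph G Γ).Adj (Quot.mk (orbRel Γ VG) x) (Quot.mk (orbRel Γ VG) y) :=
          β.2.2 r r hloop _ hx.1 _ hy.1
        obtain ⟨y', hQy', hady'⟩ := quot_adj_lift G hGadj hq
        obtain ⟨ε, hε⟩ := quotMk_eq_iff.mp hQy'.symm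
        have hε1 : ε = 1 := hFour y x₀ x₀ x ε (G.symm _ _ hy.2) hx₀self hx.2 (hε ▸ hady')
        rw [hε1, one_smul] at hε
        exact hε ▸ hady'
      have hAim : ∀ X ∈ β.1 r, ∃ x ∈ A, Quot.mk (orbRel Γ VG) x = X := by
        intro X hX
        have hq : (quotGraph G Γ).Adj (Quot.mk (orbRel Γ VG) x₀) X := β.2.2 r r hloop _ hO X hX
        obtain ⟨x, hQx, hadx⟩ := quot_adj_lift G hGadj hq
        exact ⟨x, ⟨by rw [hQx]; exact hX, hadx⟩, hQx⟩
      refine ⟨⟨fun _ => A, fun _ => ⟨x₀, hx₀A⟩, fun v w _ x hx y hy => hpair x hx y hy⟩, ?_⟩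
      apply Subtype.ext
      funext u
      show Quot.mk (orbRel Γ VG) '' A = β.1 u
      rw [show u = r from hsing u r]
      apply Set.ext
      intro X
      exact ⟨fun ⟨x, hx, hQx⟩ => hQx ▸ hx.1, fun hX => hAim X hX⟩
    · -- T has at least two vertices
      push_neg at hsing
      obtain ⟨u₁, w₁, hne1⟩ := hsing
      have hSconn : S.Connected := hStree.isConnected
      have hSacyc : S.IsAcyclic := hStree.IsAcyclic
      have hSnbr : ∀ u : VT, ∃ w, S.Adj u w := by
        intro u
        have hz : ∃ z : VT, z ≠ u := by
          rcases eq_or_ne u₁ u with rfl | h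
          · exact ⟨w₁, fun hw => hne1 hw.symm⟩
          · exact ⟨u₁, h⟩
        obtain ⟨z, hz⟩ := hz
        obtain ⟨p⟩ := hSconn.preconnected u z
        cases p with
        | nil => exact absurd rfl hz
        | cons h q => exact ⟨_, h⟩
      set O : VT → Quot (orbRel Γ VG) := fun u => (β.2.1 u).choose with hOdef
      have hO : ∀ u, O u ∈ β.1 u := fun u => (β.2.1 u).choose_spec
      have hOadj : ∀ u w, S.Adj u w → (quotGraph G Γ).Adj (O u) (O w) :=
        fun u w h => β.2.2 u w (hSsub u w h) _ (hO u) _ (hO w)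
      obtain ⟨b, hb1, hb2⟩ := exists_base hSconn hSacyc G hGadj O hOadj
      set A : VT → Set VG := fun u =>
        {x | Quot.mk (orbRel Γ VG) x ∈ β.1 u ∧ ∀ w, S.Adj u w → G.Adj x (b w)} with hAdef
      have hL1 : ∀ u pu, S.Adj u pu → ∀ x, Quot.mk (orbRel Γ VG) x ∈ β.1 u →
          G.Adj x (b pu) → x ∈ A u := by
        intro u pu hpu x hQx hadjx
        refine ⟨hQx, fun w' hw' => ?_⟩
        have hq : (quotGraph G Γ).Adj (Quot.mk (orbRel Γ VG) x)
            (Quot.mk (orbRel Γ VG) (b w')) := by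
          rw [hb1 w']
          exact β.2.2 u w' (hSsub u w' hw') _ hQx _ (hO w')
        obtain ⟨y, hQy, hady⟩ := quot_adj_lift G hGadj hq
        obtain ⟨ε, hε⟩ := quotMk_eq_iff.mp hQy.symm
        have hε1 : ε = 1 := hFour (b w') (b u) (b pu) x ε (hb2 w' u hw'.symm)
          (hb2 u pu hpu) (G.symm _ _ hadjx) (hε ▸ hady)
        rw [hε1, one_smul] at hε
        exact hε ▸ hady
      have hAim : ∀ u, ∀ X ∈ β.1 u, ∃ x ∈ A u, Quot.mk (orbRel Γ VG) x = X := by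
        intro u X hX
        obtain ⟨pu, hpu⟩ := hSnbr u
        have hq : (quotGraph G Γ).Adj (Quot.mk (orbRel Γ VG) (b pu)) X := by
          rw [hb1 pu]
          exact β.2.2 pu u (hSsub pu u hpu.symm) _ (hO pu) X hX
        obtain ⟨x, hQx, hadx⟩ := quot_adj_lift G hGadj hq
        exact ⟨x, hL1 u pu hpu x (by rw [hQx]; exact hX) (G.symm _ _ hadx), hQx⟩
      have hmh : T.IsMultiHom G A := by
        constructor
        · intro u
          obtain ⟨x, hx, -⟩ := hAim u (O u) (hO u)
          exact ⟨x, hx⟩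
        · intro u w huw x hx y hy
          have hq : (quotGraph G Γ).Adj (Quot.mk (orbRel Γ VG) x) (Quot.mk (orbRel Γ VG) y) :=
            β.2.2 u w huw _ hx.1 _ hy.1
          obtain ⟨y', hQy', hady'⟩ := quot_adj_lift G hGadj hq
          obtain ⟨ε, hε⟩ := quotMk_eq_iff.mp hQy'.symm
          suffices hε1 : ε = 1 by
            rw [hε1, one_smul] at hε
            exact hε ▸ hady'
          by_cases hsuw : S.Adj u w
          · exact hFour y (b u) (b w) x ε (hy.2 u hsuw.symm) (hb2 u w hsuw)
              (G.symm _ _ (hx.2 w hsuw)) (hε ▸ hady')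
          · rcases eq_or_ne u w with rfl | hneuw
            · obtain ⟨pu, hpu⟩ := hSnbr u
              exact hFour y y (b pu) x ε (hSelf u huw y hy.1) (hy.2 pu hpu)
                (G.symm _ _ (hx.2 pu hpu)) (hε ▸ hady')
            · -- edge outside the spanning tree: use the fundamental cycle length
              by_contra hεne
              obtain ⟨q, hqlen⟩ := hSconn.exists_walk_length_eq_dist w u
              set k := S.dist w u with hkdef
              have hwalkadj : ∀ i < k, S.Adj (q.getVert i) (q.getVert (i + 1)) := by
                intro i hi
                exact q.adj_getVert_succ (by omega)
              have hqk : q.getVert k = u := by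
                rw [← hqlen]; exact q.getVert_length
              have hk0 : k ≠ 0 := by
                intro h0
                exact hneuw (hSconn.dist_eq_zero_iff.mp (hkdef ▸ h0)).symm
              have hk1 : k ≠ 1 := by
                intro h1
                have h2 := hwalkadj 0 (by omega)
                rw [q.getVert_zero] at h2
                rw [show (0:ℕ) + 1 = k from h1.symm, hqk] at h2
                exact hsuw h2.symm
              apply hdisc y ε hεne (k + 1)
                (Or.inl ⟨u, w, huw, hsuw, by rw [SimpleGraph.dist_comm]⟩)
              apply G.hasWalk_concat (w := x)
              · refine ⟨fun i => if i = 0 then y else if i < k then b (q.getVert i) else x,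
                  by norm_num, ?_, ?_⟩
                · simp only [if_neg hk0, if_neg (lt_irrefl k)]
                · intro i hi
                  beta_reduce
                  by_cases hi0 : i = 0
                  · subst hi0
                    simp only [if_pos rfl, if_neg one_ne_zero, if_pos (by omega : (1:ℕ) < k)]
                    have h2 := hwalkadj 0 (by omega)
                    rw [q.getVert_zero] at h2
                    exact hy.2 _ h2
                  · rw [if_neg hi0, if_pos (by omega : i < k), if_neg (by omega : ¬ i + 1 = 0)]
                    by_cases hik : i + 1 < k
                    · rw [if_pos hik]
                      exact hb2 _ _ (hwalkadj i (by omega))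
                    · rw [if_neg hik]
                      have hlast : S.Adj (q.getVert i) u := by
                        have h2 := hwalkadj i (by omega)
                        rwa [show i + 1 = k by omega, hqk] at h2
                      exact G.symm _ _ (hx.2 _ hlast.symm)
              · exact hε ▸ hady'
      refine ⟨⟨A, hmh⟩, ?_⟩
      apply Subtype.ext
      funext u
      show Quot.mk (orbRel Γ VG) '' A u = β.1 u
      apply Set.ext
      intro X
      exact ⟨fun ⟨x, hx, hQx⟩ => hQx ▸ hx.1, fun hX => hAim u X hX⟩
  · -- fibers are orbits
    intro α β
    constructor
    · intro h
      have hsub : ∀ u, Quot.mk (orbRel Γ VG) '' α.1 u ⊆ Quot.mk (orbRel Γ VG) '' β.1 u := by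
        intro u
        have := congrArg (fun (δ : HomPoset T (quotGraph G Γ)) => δ.1 u) h
        simp only [quotHom] at this
        rw [this]
      obtain ⟨γ, hγ⟩ := hProp α β hsub
      refine ⟨γ, ?_⟩
      apply Subtype.ext
      funext u
      show β.1 u = (γ • ·) '' α.1 u
      have hcard : (β.1 u).ncard ≤ ((γ • ·) '' α.1 u).ncard := by
        rw [Set.ncard_image_of_injective _ (MulAction.injective γ)]
        have e1 := Set.ncard_image_of_injOn (hInj α u)
        have e2 := Set.ncard_image_of_injOn (hInj β u)
        have e3 : Quot.mk (orbRel Γ VG) '' α.1 u = Quot.mk (orbRel Γ VG) '' β.1 u := by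
          have := congrArg (fun (δ : HomPoset T (quotGraph G Γ)) => δ.1 u) h
          simpa only [quotHom] using this
        rw [← e1, ← e2, e3]
      exact (Set.eq_of_subset_of_ncard_le (hγ u) hcard (Set.toFinite _)).symm
    · rintro ⟨γ, rfl⟩
      apply Subtype.ext
      funext u
      show Quot.mk (orbRel Γ VG) '' α.1 u = Quot.mk (orbRel Γ VG) '' ((γ • ·) '' α.1 u)
      rw [Set.image_image]
      exact Set.image_congr fun x _ => (quotMk_smul γ x).symm
  · -- order relation
    intro α β
    constructor
    · intro h
      have hsub : ∀ u, Quot.mk (orbRel Γ VG) '' α.1 u ⊆ Quot.mk (orbRel Γ VG) '' β.1 u :=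
        fun u => h u
      obtain ⟨γ, hγ⟩ := hProp α β hsub
      exact ⟨γ, fun u => hγ u⟩
    · rintro ⟨γ, hγ⟩
      intro u
      rintro - ⟨x, hx, rfl⟩
      exact ⟨γ • x, hγ u ⟨x, hx, rfl⟩, quotMk_smul γ x⟩
end

section
/- Let P be a finite poset equipped with a fixed-point-free involutive order automorphism τ, and suppose there is a strictly order-preserving function d : P → {0, 1, …, n} with d(τ(p)) = d(p) for all p ∈ P. Let K_2 carry the right Z_2-action exchanging its two vertices, and let (Chain^2(P))^1 carry the left Z_2-action induced by τ. Then there exists a graph homomorphism from K_2 ×_{Z_2} (Chain^2(P))^1 to K_{n+2}; i.e. χ(K_2 ×_{Z_2} (Chain^2(P))^1) ≤ n + 2. (This is the combinatorial form of the statement that the graph associated to the second barycentric subdivision of a regular n-dimensional cell complex with a free cellular Z_2-action is (n+2)-colorable, with P the face poset and d the dimension function.) -/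
/-- A graph: a vertex set with a symmetric adjacency relation (loops allowed). -/
structure Graph17 (V : Type) where
  Adj : V → V → Prop
  symm : ∀ x y, Adj x y → Adj y x

/-- Graph homomorphisms. -/
def Graph17.IsHom {V W : Type} (G : Graph17 V) (H : Graph17 W) (f : V → W) : Prop :=
  ∀ v w, G.Adj v w → H.Adj (f v) (f w)

/-- The complete loopless graph `K_n` on `Fin n`. -/
def completeK (n : ℕ) : Graph17 (Fin n) where
  Adj i j := i ≠ j
  symm _ _ h := h.symm

/-- The atoms (minimal elements) of a poset. -/
def MinVert (P : Type) [PartialOrder P] : Type := {x : P // ∀ y, y ≤ x → y = x}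

/-- The reflexive graph `P^1` on the atoms of `P`. -/
def oneSkel (P : Type) [PartialOrder P] : Graph17 (MinVert P) where
  Adj a b := ∃ z, a.1 ≤ z ∧ b.1 ≤ z
  symm a b h := by obtain ⟨z, h1, h2⟩ := h; exact ⟨z, h2, h1⟩

/-- The poset `Chain(P)` of nonempty finite chains of `P`, ordered by inclusion. -/
def ChainPoset (P : Type) [PartialOrder P] : Type :=
  {c : Set P // c.Nonempty ∧ c.Finite ∧ IsChain (· ≤ ·) c}

instance (P : Type) [PartialOrder P] : PartialOrder (ChainPoset P) :=
  Subtype.partialOrder _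

/-- The map `Chain(P) → Chain(Q)` induced by a monotone map, by taking images. -/
def chainMap {P Q : Type} [PartialOrder P] [PartialOrder Q] (f : P → Q) (hf : Monotone f)
    (c : ChainPoset P) : ChainPoset Q :=
  ⟨f '' c.1, c.2.1.image f, c.2.2.1.image f,
   c.2.2.2.image_of_map_rel _ _ f (fun _ _ h => hf h)⟩

theorem chainMap_mono {P Q : Type} [PartialOrder P] [PartialOrder Q] (f : P → Q)
    (hf : Monotone f) : Monotone (chainMap f hf) :=
  fun _ _ h => Set.image_mono h

theorem chainMap_invol {P : Type} [PartialOrder P] (f : P → P) (hf : Monotone f)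
    (hinv : ∀ x, f (f x) = x) (c : ChainPoset P) :
    chainMap f hf (chainMap f hf c) = c := by
  apply Subtype.ext
  show f '' (f '' c.1) = c.1
  rw [Set.image_image]
  have h : (fun x => f (f x)) = fun x => x := funext hinv
  rw [h, Set.image_id']

/-- The map induced on atoms by a monotone map with a two-sided monotone inverse. -/
def minMap {Q : Type} [PartialOrder Q] (f g : Q → Q) (hg : Monotone g)
    (hfg : ∀ x, f (g x) = x) (hgf : ∀ x, g (f x) = x) (x : MinVert Q) : MinVert Q :=
  ⟨f x.1, fun q hq => by
    have h1 : g q ≤ x.1 := by have := hg hq; rwa [hgf] at this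
    have h2 := x.2 _ h1
    have h3 : f (g q) = f x.1 := by rw [h2]
    rwa [hfg] at h3⟩

/-- The action induced by the involution `τ` on the atoms of `Chain²(P)`. -/
def chain2MinAct {P : Type} [PartialOrder P] (τ : P → P) (hmono : Monotone τ)
    (hinv : ∀ x, τ (τ x) = x) :
    MinVert (ChainPoset (ChainPoset P)) → MinVert (ChainPoset (ChainPoset P)) :=
  minMap (chainMap (chainMap τ hmono) (chainMap_mono τ hmono))
         (chainMap (chainMap τ hmono) (chainMap_mono τ hmono))
         (chainMap_mono _ _)
         (chainMap_invol _ _ (chainMap_invol τ hmono hinv))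
         (chainMap_invol _ _ (chainMap_invol τ hmono hinv))

/-- The orbit relation of the diagonal `Z₂`-action on `K₂ × (Chain²(P))^1`. -/
def rel17 {P : Type} [PartialOrder P] (τ : P → P) (hmono : Monotone τ)
    (hinv : ∀ x, τ (τ x) = x)
    (a b : Fin 2 × MinVert (ChainPoset (ChainPoset P))) : Prop :=
  a = b ∨ b = (Equiv.swap 0 1 a.1, chain2MinAct τ hmono hinv a.2)

/-- The twisted product graph `K₂ ×_{Z₂} (Chain²(P))^1`. -/
def twK2 {P : Type} [PartialOrder P] (τ : P → P) (hmono : Monotone τ)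
    (hinv : ∀ x, τ (τ x) = x) : Graph17 (Quot (rel17 τ hmono hinv)) where
  Adj X Y := ∃ a b, Quot.mk _ a = X ∧ Quot.mk _ b = Y ∧ a.1 ≠ b.1 ∧
    (oneSkel (ChainPoset (ChainPoset P))).Adj a.2 b.2
  symm X Y h := by
    obtain ⟨a, b, ha, hb, h1, h2⟩ := h
    exact ⟨b, a, hb, ha, h1.symm, (oneSkel _).symm _ _ h2⟩

section Aux

variable {P : Type} [PartialOrder P]

/-- The set of "positive" elements of a chain, as a finset. -/
noncomputable def plusSet (s : P → Bool) (c : ChainPoset P) : Finset P :=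
  c.2.2.1.toFinset.filter (fun p => s p = true)

lemma mem_plusSet {s : P → Bool} {c : ChainPoset P} {p : P} :
    p ∈ plusSet s c ↔ p ∈ c.1 ∧ s p = true := by
  simp [plusSet, Set.Finite.mem_toFinset]

/-- The coloring of chains. -/
noncomputable def gcol (n : ℕ) (s : P → Bool) (d : P → Fin (n + 1)) (c : ChainPoset P) :
    Fin (n + 2) :=
  if h : (plusSet s c).Nonempty then (((plusSet s c).image d).max' (h.image d)).succ else 0

lemma chain_d_eq {n : ℕ} {d : P → Fin (n + 1)} (hd : StrictMono d) {c : ChainPoset P} {p q : P}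
    (hp : p ∈ c.1) (hq : q ∈ c.1) (h : d p = d q) : p = q := by
  rcases eq_or_ne p q with h' | h'
  · exact h'
  rcases c.2.2.2 hp hq h' with hle | hle
  · exact absurd (hd (lt_of_le_of_ne hle h')) (by simp [h])
  · exact absurd (hd (lt_of_le_of_ne hle (Ne.symm h'))) (by simp [h])

lemma gcol_key {n : ℕ} (τ : P → P) (hmono : Monotone τ)
    (d : P → Fin (n + 1)) (hd : StrictMono d) (hdτ : ∀ p, d (τ p) = d p)
    (s : P → Bool) (hs : ∀ p, s (τ p) = !s p)
    (c c' : ChainPoset P) (h : c.1 ⊆ c'.1 ∨ c'.1 ⊆ c.1) :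
    gcol n s d c ≠ gcol n s d (chainMap τ hmono c') := by
  have himg : (chainMap τ hmono c').1 = τ '' c'.1 := rfl
  by_cases h1 : (plusSet s c).Nonempty <;>
    by_cases h2 : (plusSet s (chainMap τ hmono c')).Nonempty
  · simp only [gcol, dif_pos h1, dif_pos h2]
    intro heq
    have hj := Fin.succ_injective _ heq
    obtain ⟨p, hp, hdp⟩ := Finset.mem_image.1 (((plusSet s c).image d).max'_mem (h1.image d))
    obtain ⟨p'', hp'', hdp''⟩ := Finset.mem_image.1
      (((plusSet s (chainMap τ hmono c')).image d).max'_mem (h2.image d))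
    rw [mem_plusSet] at hp hp''
    obtain ⟨hpc, hsp⟩ := hp
    obtain ⟨hpc'', hsp''⟩ := hp''
    rw [himg] at hpc''
    obtain ⟨q, hq, rfl⟩ := hpc''
    have hsq : s q = false := by
      have := hs q
      rw [hsp''] at this
      cases hq' : s q
      · rfl
      · rw [hq'] at this; exact absurd this.symm (by simp)
    have hdq : d q = d p := by
      rw [← hdτ q] at *
      rw [hdp'', ← hj, hdp]
    rcases h with hsub | hsub
    · have := chain_d_eq hd hq (hsub hpc) hdq
      rw [this] at hsq
      rw [hsq] at hsp
      exact absurd hsp (by simp)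
    · have := chain_d_eq hd (hsub hq) hpc hdq
      rw [this] at hsq
      rw [hsq] at hsp
      exact absurd hsp (by simp)
  · simp only [gcol, dif_pos h1, dif_neg h2]
    exact Fin.succ_ne_zero _
  · simp only [gcol, dif_neg h1, dif_pos h2]
    exact (Fin.succ_ne_zero _).symm
  · exfalso
    rcases h with hsub | hsub
    · obtain ⟨p, hp⟩ := c.2.1
      have hsp : s p = false := by
        cases hq' : s p
        · rfl
        · exact absurd ⟨p, mem_plusSet.2 ⟨hp, hq'⟩⟩ h1
      refine h2 ⟨τ p, mem_plusSet.2 ⟨?_, ?_⟩⟩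
      · rw [himg]; exact Set.mem_image_of_mem τ (hsub hp)
      · rw [hs, hsp]; rfl
    · obtain ⟨q, hq⟩ := c'.2.1
      cases hsq : s q
      · refine h2 ⟨τ q, mem_plusSet.2 ⟨?_, ?_⟩⟩
        · rw [himg]; exact Set.mem_image_of_mem τ hq
        · rw [hs, hsq]; rfl
      · exact h1 ⟨q, mem_plusSet.2 ⟨hsub hq, hsq⟩⟩

/-- Pick the unique element of a minimal chain of chains. -/
noncomputable def pickC (a : MinVert (ChainPoset (ChainPoset P))) : ChainPoset P :=
  a.1.2.1.some

lemma pickC_spec (a : MinVert (ChainPoset (ChainPoset P))) {c : ChainPoset P}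
    (hc : c ∈ a.1.1) : c = pickC a := by
  have hB : (⟨{c}, Set.singleton_nonempty c, Set.finite_singleton c,
      Set.Subsingleton.isChain Set.subsingleton_singleton⟩ : ChainPoset (ChainPoset P)) ≤ a.1 :=
    Set.singleton_subset_iff.2 hc
  have hBa := a.2 _ hB
  have hmem : pickC a ∈ a.1.1 := a.1.2.1.some_mem
  rw [← hBa] at hmem
  exact (Set.mem_singleton_iff.1 hmem).symm

lemma pickC_act (τ : P → P) (hmono : Monotone τ) (hinv : ∀ x, τ (τ x) = x)
    (a : MinVert (ChainPoset (ChainPoset P))) :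
    pickC (chain2MinAct τ hmono hinv a) = chainMap τ hmono (pickC a) := by
  have hmem : pickC (chain2MinAct τ hmono hinv a) ∈ (chain2MinAct τ hmono hinv a).1.1 :=
    (chain2MinAct τ hmono hinv a).1.2.1.some_mem
  have heq : (chain2MinAct τ hmono hinv a).1.1 = chainMap τ hmono '' a.1.1 := rfl
  rw [heq] at hmem
  obtain ⟨c, hc, hce⟩ := hmem
  rw [← hce, ← pickC_spec a hc]

lemma act_act (τ : P → P) (hmono : Monotone τ) (hinv : ∀ x, τ (τ x) = x)
    (a : MinVert (ChainPoset (ChainPoset P))) :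
    chain2MinAct τ hmono hinv (chain2MinAct τ hmono hinv a) = a :=
  Subtype.ext (chainMap_invol (chainMap τ hmono) (chainMap_mono τ hmono)
    (chainMap_invol τ hmono hinv) a.1)

lemma adj_comp {a b : MinVert (ChainPoset (ChainPoset P))}
    (h : (oneSkel (ChainPoset (ChainPoset P))).Adj a b) :
    (pickC a).1 ⊆ (pickC b).1 ∨ (pickC b).1 ⊆ (pickC a).1 := by
  obtain ⟨z, h1, h2⟩ := h
  have ha : pickC a ∈ z.1 := h1 a.1.2.1.some_mem
  have hb : pickC b ∈ z.1 := h2 b.1.2.1.some_mem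
  rcases eq_or_ne (pickC a) (pickC b) with he | hne
  · left; rw [he]
  rcases z.2.2.2 ha hb hne with hle | hle
  · exact Or.inl hle
  · exact Or.inr hle

end Aux

/-- if a finite poset `P` carries a fixed-point-free involutive order
automorphism `τ` and a strictly order-preserving, `τ`-invariant function
`d : P → {0,…,n}`, then `χ(K₂ ×_{Z₂} (Chain²(P))^1) ≤ n + 2`. -/
theorem stmt_17 {P : Type} [PartialOrder P] [Fintype P] (n : ℕ)
    (τ : P → P) (hmono : Monotone τ) (hinv : ∀ x, τ (τ x) = x)
    (hfpf : ∀ p, τ p ≠ p)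
    (d : P → Fin (n + 1)) (hd : StrictMono d) (hdτ : ∀ p, d (τ p) = d p) :
    ∃ f : Quot (rel17 τ hmono hinv) → Fin (n + 2),
      (twK2 τ hmono hinv).IsHom (completeK (n + 2)) f := by
  classical
  -- a sign function alternating along τ-orbits
  set e := Fintype.equivFin P with he
  set s : P → Bool := fun p => decide (e p < e (τ p)) with hsdef
  have hs : ∀ p, s (τ p) = !s p := by
    intro p
    have h1 : e (τ (τ p)) = e p := by rw [hinv]
    have h2 : e (τ p) ≠ e p := fun h => hfpf p (e.injective h)
    simp only [hsdef, h1]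
    rcases h2.lt_or_gt with h | h
    · simp [h, not_lt_of_gt h]
    · simp [h, not_lt_of_gt h]
  set G : MinVert (ChainPoset (ChainPoset P)) → Fin (n + 2) :=
    fun m => gcol n s d (pickC m) with hGdef
  set F : Fin 2 × MinVert (ChainPoset (ChainPoset P)) → Fin (n + 2) :=
    fun a => if a.1 = 0 then G a.2 else G (chain2MinAct τ hmono hinv a.2) with hFdef
  have hFinv : ∀ a b, rel17 τ hmono hinv a b → F a = F b := by
    rintro ⟨ε, m⟩ b (rfl | rfl)
    · rfl
    · fin_cases ε
      · simp only [hFdef, Equiv.swap_apply_left]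
        norm_num
        rw [act_act]
      · simp only [hFdef, Equiv.swap_apply_right]
        norm_num
  refine ⟨Quot.lift F hFinv, ?_⟩
  rintro X Y ⟨⟨ε1, m1⟩, ⟨ε2, m2⟩, rfl, rfl, hne, hadj⟩
  have hcomp := adj_comp hadj
  show F (ε1, m1) ≠ F (ε2, m2)
  have key12 : gcol n s d (pickC m1) ≠ gcol n s d (chainMap τ hmono (pickC m2)) :=
    gcol_key τ hmono d hd hdτ s hs _ _ hcomp
  have key21 : gcol n s d (chainMap τ hmono (pickC m1)) ≠ gcol n s d (pickC m2) :=
    (gcol_key τ hmono d hd hdτ s hs _ _ hcomp.symm).symm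
  fin_cases ε1 <;> fin_cases ε2
  · exact absurd rfl hne
  · simp only [hFdef]
    norm_num
    rw [hGdef]
    simp only [pickC_act]
    exact key12
  · simp only [hFdef]
    norm_num
    rw [hGdef]
    simp only [pickC_act]
    exact key21
  · exact absurd rfl hne
end
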